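/- For every q ≥ 0, the steady-state degree distribution of the DMS model exists: the limit P(q) := lim_{t→∞} P(q,t) exists and is given by P(q) = ((m+A)/m) · (Γ(A + A/m + 1)/Γ(A)) · Γ(q+A)/Γ(q + A + 2 + A/m), where Γ denotes the Gamma function. -/

import Mathlib

open Finset Filter Topology
lemma dms_aux_eq (C c NN t : ℝ) (k e : ℕ) :
    C * c^(k+1) * (1 - c/t)^e * (NN / t) * (1/t)^k = C * (c/t)^(k+1) * (1 - c/t)^e * NN := by
  rw [div_pow, pow_succ]
  field_simp
  ring


lemma dms_ode_lemma (u a r : ℕ → ℝ) (α β : ℝ) (hα : 0 < α)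
    (hrec : ∀ᶠ t in atTop, u (t+1) = a t * u t + r t)
    (ha : Tendsto (fun t : ℕ => (t:ℝ) * (1 - a t)) atTop (𝓝 α))
    (hr : Tendsto r atTop (𝓝 β)) :
    Tendsto (fun t : ℕ => u t / t) atTop (𝓝 (β / (1 + α))) := by
  have h1α : (1:ℝ) + α ≠ 0 := by linarith
  set L := β / (1 + α) with hL
  set v := fun t : ℕ => u t / t - L with hv
  set b := fun t : ℕ => (t:ℝ) * a t / ((t:ℝ)+1) with hb
  set e := fun t : ℕ => (t:ℝ) * a t * L + r t - ((t:ℝ)+1) * L with he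
  have hvrec : ∀ᶠ t in atTop, v (t+1) = b t * v t + e t / ((t:ℝ)+1) := by
    filter_upwards [hrec, eventually_ge_atTop 1] with t ht ht1
    have htpos : (0:ℝ) < t := by exact_mod_cast ht1
    have htne : (t:ℝ) ≠ 0 := ne_of_gt htpos
    have ht1ne : (t:ℝ) + 1 ≠ 0 := by positivity
    simp only [hv, hb, he, ht]
    push_cast
    field_simp
    ring
  have hbγ : Tendsto (fun t : ℕ => ((t:ℝ)+1) * (1 - b t)) atTop (𝓝 (1 + α)) := by
    have heq : ∀ t : ℕ, ((t:ℝ)+1) * (1 - b t) = (t:ℝ) * (1 - a t) + 1 := by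
      intro t
      have ht1ne : (t:ℝ) + 1 ≠ 0 := by positivity
      simp only [hb]
      field_simp
      ring
    simp only [heq]
    simpa [add_comm] using ha.add_const 1
  have heγ : Tendsto e atTop (𝓝 0) := by
    have heq : ∀ t : ℕ, e t = -((t:ℝ) * (1 - a t) * L) + r t - L := by
      intro t; simp only [he]; ring
    have h2 := ((ha.mul_const L).neg.add hr).sub_const L
    have h3 : -(α * L) + β - L = 0 := by rw [hL]; field_simp; ring
    rw [h3] at h2
    exact h2.congr fun t => (heq t).symm
  have hv0 : Tendsto v atTop (𝓝 0) := by
    rw [Metric.tendsto_atTop]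
    intro ε hε
    have f1 : ∀ᶠ t : ℕ in atTop, 1 ≤ ((t:ℝ)+1) * (1 - b t) :=
      hbγ.eventually (eventually_ge_nhds (by linarith))
    have hbto1 : Tendsto b atTop (𝓝 1) := by
      have h0 : Tendsto (fun t : ℕ => 1/((t:ℝ)+1)) atTop (𝓝 0) :=
        tendsto_one_div_add_atTop_nhds_zero_nat
      have hmul := hbγ.mul h0
      rw [mul_zero] at hmul
      have heq : ∀ t : ℕ, b t = 1 - ((t:ℝ)+1) * (1 - b t) * (1/((t:ℝ)+1)) := by
        intro t
        have ht1ne : (t:ℝ) + 1 ≠ 0 := by positivity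
        field_simp
        ring
      have h4 := (tendsto_const_nhds (x := (1:ℝ)) (f := atTop (α := ℕ))).sub hmul
      rw [sub_zero] at h4
      exact h4.congr fun t => (heq t).symm
    have f2 : ∀ᶠ t : ℕ in atTop, 0 ≤ b t :=
      hbto1.eventually (eventually_ge_nhds (by norm_num : (0:ℝ) < 1))
    have f3 : ∀ᶠ t : ℕ in atTop, |e t| ≤ ε/2 := by
      have := heγ.eventually (Metric.ball_mem_nhds 0 (by linarith : (0:ℝ) < ε/2))
      filter_upwards [this] with t ht
      simp only [Metric.mem_ball, Real.dist_eq, sub_zero] at ht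
      linarith [ht.le]
    obtain ⟨T, hT⟩ := (((hvrec.and f1).and f2).and f3).exists_forall_of_atTop
    have key : ∀ t, T ≤ t → (t:ℝ) * |v t| ≤ (T:ℝ) * |v T| + ((t:ℝ) - T) * (ε/2) := by
      intro t ht
      induction t, ht using Nat.le_induction with
      | base => simp
      | succ t ht ihp =>
        obtain ⟨⟨⟨e1, e2⟩, e3⟩, e4⟩ := hT t ht
        have ht1pos : (0:ℝ) < (t:ℝ)+1 := by positivity
        have hvb : |v (t+1)| ≤ b t * |v t| + |e t| / ((t:ℝ)+1) :=
          calc |v (t+1)| = |b t * v t + e t/((t:ℝ)+1)| := by rw [e1]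
            _ ≤ |b t * v t| + |e t/((t:ℝ)+1)| := abs_add_le _ _
            _ = b t * |v t| + |e t|/((t:ℝ)+1) := by
                rw [abs_mul, abs_of_nonneg e3, abs_div, abs_of_pos ht1pos]
        have hb2 : ((t:ℝ)+1) * b t ≤ t := by nlinarith
        have habs : (0:ℝ) ≤ |v t| := abs_nonneg _
        have step : ((t:ℝ)+1) * |v (t+1)| ≤ (t:ℝ) * |v t| + ε/2 := by
          calc ((t:ℝ)+1) * |v (t+1)| ≤ ((t:ℝ)+1) * (b t * |v t| + |e t| / ((t:ℝ)+1)) := by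
                gcongr
            _ = ((t:ℝ)+1) * b t * |v t| + |e t| := by field_simp
            _ ≤ (t:ℝ) * |v t| + ε/2 := by nlinarith
        push_cast
        push_cast at ihp
        linarith
    obtain ⟨N0, hN0⟩ := exists_nat_gt (2 * ((T:ℝ) * |v T|) / ε)
    refine ⟨max (T+1) N0, fun t ht => ?_⟩
    have h1 : T + 1 ≤ t := le_trans (le_max_left _ _) ht
    have h2 : N0 ≤ t := le_trans (le_max_right _ _) ht
    have htT : T ≤ t := by omega
    have hkey := key t htT
    have htpos : (0:ℝ) < t := by exact_mod_cast (show 0 < t by omega)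
    rw [Real.dist_eq, sub_zero]
    have hNt : 2 * ((T:ℝ) * |v T|) / ε < t :=
      lt_of_lt_of_le hN0 (by exact_mod_cast h2)
    have hTv : (T:ℝ) * |v T| < ε/2 * t := by
      rw [div_lt_iff₀ hε] at hNt; nlinarith
    have hTnn : (0:ℝ) ≤ (T:ℝ) := Nat.cast_nonneg T
    have hfin : (t:ℝ) * |v t| < (t:ℝ) * ε := by nlinarith
    exact (mul_lt_mul_iff_right₀ htpos).mp hfin
  have hadd := hv0.add_const L
  rw [zero_add] at hadd
  refine hadd.congr fun t => ?_
  simp [hv]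


set_option maxHeartbeats 2000000 in
/-- existence and Gamma-function formula for the steady-state degree
distribution of the DMS model. -/
theorem dms_steady_state_distribution
    (m : ℕ) (hm : 1 ≤ m) (A : ℝ) (hA : 0 < A)
    (P : ℕ → ℕ → ℕ → ℝ)
    (hP11 : ∀ q : ℕ, P q 1 1 = if q = m then 1 else 0)
    (hPii : ∀ q i : ℕ, 2 ≤ i → P q i i = if q = 0 then 1 else 0)
    (hPrec : ∀ q i t : ℕ, 1 ≤ i → i ≤ t →
      P q i (t + 1) = ∑ j ∈ Finset.Icc 0 (min m q),
        (m.choose j : ℝ) * (((q : ℝ) - (j : ℝ) + A) / ((m + A) * t)) ^ j *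
          (1 - ((q : ℝ) - (j : ℝ) + A) / ((m + A) * t)) ^ (m - j) * P (q - j) i t)
    (Pnet : ℕ → ℕ → ℝ)
    (hPnet : ∀ q t : ℕ, 1 ≤ t →
      Pnet q t = (1 / (t : ℝ)) * ∑ i ∈ Finset.Icc 1 t, P q i t) :
    ∀ q : ℕ,
      Filter.Tendsto (fun t : ℕ => Pnet q t) Filter.atTop
        (nhds ((((m : ℝ) + A) / (m : ℝ)) *
          (Real.Gamma (A + A / (m : ℝ) + 1) / Real.Gamma A) *
          (Real.Gamma ((q : ℝ) + A) / Real.Gamma ((q : ℝ) + A + 2 + A / (m : ℝ))))) := by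
  have hm0 : (0:ℝ) < m := by exact_mod_cast hm
  have hmA : (0:ℝ) < (m:ℝ) + A := by linarith
  obtain ⟨L, hLdef⟩ : ∃ L : ℕ → ℝ, L = fun q : ℕ => (((m:ℝ) + A) / (m:ℝ)) *
      (Real.Gamma (A + A / (m:ℝ) + 1) / Real.Gamma A) *
      (Real.Gamma ((q:ℝ) + A) / Real.Gamma ((q:ℝ) + A + 2 + A / (m:ℝ))) := ⟨_, rfl⟩
  set N : ℕ → ℕ → ℝ := fun q t => ∑ i ∈ Finset.Icc 1 t, P q i t with hNdef
  have stepA : ∀ q t : ℕ, 1 ≤ t → N q (t+1) = (if q = 0 then 1 else 0) +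
      ∑ j ∈ Finset.Icc 0 (min m q),
        (m.choose j : ℝ) * (((q : ℝ) - (j : ℝ) + A) / (((m:ℝ) + A) * t)) ^ j *
          (1 - ((q : ℝ) - (j : ℝ) + A) / (((m:ℝ) + A) * t)) ^ (m - j) * N (q - j) t := by
    intro q t ht
    have h1 : N q (t+1) = (∑ i ∈ Finset.Icc 1 t, P q i (t+1)) + P q (t+1) (t+1) := by
      rw [hNdef]
      exact Finset.sum_Icc_succ_top (by omega) _
    rw [h1, hPii q (t+1) (by omega)]
    have h2 : ∀ i ∈ Finset.Icc 1 t, P q i (t+1) = ∑ j ∈ Finset.Icc 0 (min m q),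
        (m.choose j : ℝ) * (((q : ℝ) - (j : ℝ) + A) / (((m:ℝ) + A) * t)) ^ j *
          (1 - ((q : ℝ) - (j : ℝ) + A) / (((m:ℝ) + A) * t)) ^ (m - j) * P (q - j) i t := by
      intro i hi
      rw [Finset.mem_Icc] at hi
      exact hPrec q i t hi.1 hi.2
    rw [Finset.sum_congr rfl h2, Finset.sum_comm]
    rw [add_comm]
    congr 1
    refine Finset.sum_congr rfl fun j hj => ?_
    rw [hNdef, Finset.mul_sum]
  have stepB : ∀ q : ℕ, Tendsto (fun t : ℕ => N q t / t) atTop (𝓝 (L q)) := by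
    intro q
    induction q using Nat.strong_induction_on with
    | _ q ih =>
    set y : ℝ := ((q:ℝ) + A) / ((m:ℝ) + A) with hy
    have hy0 : 0 < y := by positivity
    set α : ℝ := y * m with hα'
    have hα : 0 < α := by positivity
    set a : ℕ → ℝ := fun t => (1 - y / (t:ℝ)) ^ m with ha'
    set r : ℕ → ℝ := fun t => (if q = 0 then 1 else 0) +
        ∑ j ∈ Finset.Icc 1 (min m q),
          (m.choose j : ℝ) * (((q : ℝ) - (j : ℝ) + A) / (((m:ℝ) + A) * t)) ^ j *
            (1 - ((q : ℝ) - (j : ℝ) + A) / (((m:ℝ) + A) * t)) ^ (m - j) * N (q - j) t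
      with hr'
    have hsplit : Finset.Icc 0 (min m q) = insert 0 (Finset.Icc 1 (min m q)) := by
      ext x; simp; omega
    have hrec : ∀ᶠ t in atTop, N q (t+1) = a t * N q t + r t := by
      filter_upwards [eventually_ge_atTop 1] with t ht
      rw [stepA q t ht, hsplit, Finset.sum_insert (by simp)]
      have h0 : (m.choose 0 : ℝ) * (((q : ℝ) - ((0:ℕ) : ℝ) + A) / (((m:ℝ) + A) * t)) ^ (0:ℕ) *
          (1 - ((q : ℝ) - ((0:ℕ) : ℝ) + A) / (((m:ℝ) + A) * t)) ^ (m - 0) * N (q - 0) t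
          = a t * N q t := by
        rw [ha']
        have : ((q : ℝ) + A) / (((m:ℝ) + A) * t) = y / t := by rw [hy, div_div]
        simp [this]
      rw [h0, hr']
      ring
    have ha : Tendsto (fun t : ℕ => (t:ℝ) * (1 - a t)) atTop (𝓝 α) := by
      have heq : ∀ᶠ t : ℕ in atTop, (t:ℝ) * (1 - a t)
          = y * ∑ k ∈ Finset.range m, (1 - y/(t:ℝ))^k := by
        filter_upwards [eventually_ge_atTop 1] with t ht
        have htne : (t:ℝ) ≠ 0 := by
          have : (0:ℝ) < t := by exact_mod_cast ht
          exact ne_of_gt this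
        have hgeom := geom_sum_mul (1 - y/(t:ℝ)) m
        rw [ha']
        have h5 : (1 - y/(t:ℝ)) - 1 = -(y/t) := by ring
        rw [h5] at hgeom
        have h6 : 1 - (1 - y/(t:ℝ))^m = (y/t) * ∑ k ∈ Finset.range m, (1 - y/(t:ℝ))^k := by
          have := congrArg (fun z => -z) hgeom
          simp only [neg_sub] at this ⊢
          nlinarith [hgeom]
        rw [h6]
        field_simp
        try ring
      refine Tendsto.congr' (heq.mono fun t h => h.symm) ?_
      have hsum : Tendsto (fun t : ℕ => ∑ k ∈ Finset.range m, (1 - y/(t:ℝ))^k) atTop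
          (𝓝 (m : ℝ)) := by
        have hone : ∀ k : ℕ, Tendsto (fun t : ℕ => (1 - y/(t:ℝ))^k) atTop (𝓝 1) := by
          intro k
          have h7 : Tendsto (fun t : ℕ => y/(t:ℝ)) atTop (𝓝 0) :=
            tendsto_const_div_atTop_nhds_zero_nat y
          have := ((tendsto_const_nhds (x := (1:ℝ)) (f := atTop (α := ℕ))).sub h7).pow k
          simpa using this
        have := tendsto_finset_sum (Finset.range m) (fun k _ => hone k)
        simpa using this
      have := hsum.const_mul y
      rwa [hα']
    set l : ℕ → ℝ := fun j => (m.choose j : ℝ) * (((q:ℝ) - (j:ℝ) + A)/((m:ℝ)+A))^j *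
        L (q - j) * (0:ℝ)^(j-1) with hl'
    set β : ℝ := (if q = 0 then 1 else 0) + ∑ j ∈ Finset.Icc 1 (min m q), l j with hβ'
    have hrt : Tendsto r atTop (𝓝 β) := by
      rw [hr', hβ']
      apply Tendsto.add tendsto_const_nhds
      apply tendsto_finset_sum
      intro j hj
      rw [Finset.mem_Icc] at hj
      have hj1 : 1 ≤ j := hj.1
      have hjq : j ≤ q := le_trans hj.2 (min_le_right _ _)
      set c : ℝ := ((q:ℝ) - (j:ℝ) + A)/((m:ℝ)+A) with hc'
      have heq : ∀ᶠ t : ℕ in atTop,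
          (m.choose j : ℝ) * c^j * (1 - c/(t:ℝ))^(m-j) * (N (q-j) t / t) * (1/(t:ℝ))^(j-1)
          = (m.choose j : ℝ) * (((q:ℝ)-(j:ℝ)+A)/(((m:ℝ)+A)*t))^j *
            (1 - ((q:ℝ)-(j:ℝ)+A)/(((m:ℝ)+A)*t))^(m-j) * N (q-j) t := by
        filter_upwards [eventually_ge_atTop 1] with t ht
        have htne : (t:ℝ) ≠ 0 := by
          have : (0:ℝ) < t := by exact_mod_cast ht
          exact ne_of_gt this
        have hcd : ((q:ℝ)-(j:ℝ)+A)/(((m:ℝ)+A)*t) = c/t := by rw [hc', div_div]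
        rw [hcd]
        obtain ⟨k, rfl⟩ : ∃ k, j = k + 1 := ⟨j-1, by omega⟩
        simp only [Nat.add_sub_cancel]
        exact dms_aux_eq _ c _ t k (m - (k+1))
      have hpow : Tendsto (fun t : ℕ => (1 - c/(t:ℝ))^(m-j)) atTop (𝓝 1) := by
        have h7 : Tendsto (fun t : ℕ => c/(t:ℝ)) atTop (𝓝 0) :=
          tendsto_const_div_atTop_nhds_zero_nat c
        have := ((tendsto_const_nhds (x := (1:ℝ)) (f := atTop (α := ℕ))).sub h7).pow (m-j)
        simpa using this
      have hpow2 : Tendsto (fun t : ℕ => (1/(t:ℝ))^(j-1)) atTop (𝓝 ((0:ℝ)^(j-1))) :=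
        tendsto_one_div_atTop_nhds_zero_nat.pow (j-1)
      have base := ((tendsto_const_nhds (x := ((m.choose j : ℝ) * c^j))
          (f := atTop (α := ℕ))).mul hpow).mul (ih (q-j) (by omega)) |>.mul hpow2
      refine Tendsto.congr' heq ?_
      convert base using 1
      rw [hl', hc']
      simp only [mul_one]
    have hode := dms_ode_lemma (fun t => N q t) a r α β hα hrec ha hrt
    have hΓA : Real.Gamma A ≠ 0 := (Real.Gamma_pos_of_pos hA).ne'
    have hG1 : Real.Gamma (A + A/(m:ℝ) + 1) ≠ 0 :=
      (Real.Gamma_pos_of_pos (by positivity)).ne'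
    have h1α : (1:ℝ) + α ≠ 0 := by positivity
    have hfin : β / (1 + α) = L q := by
      rw [div_eq_iff h1α]
      rcases Nat.eq_zero_or_pos q with hq0 | hqpos
      · subst hq0
        have hempty : Finset.Icc 1 (min m 0) = (∅ : Finset ℕ) := by simp
        rw [hβ', hempty]
        simp only [Finset.sum_empty, if_pos rfl, add_zero]
        simp only [hLdef, Nat.cast_zero, zero_add]
        have hrwg : Real.Gamma (A + 2 + A/(m:ℝ)) =
            (A + A/(m:ℝ) + 1) * Real.Gamma (A + A/(m:ℝ) + 1) := by
          rw [show A + 2 + A/(m:ℝ) = (A + A/(m:ℝ) + 1) + 1 by ring,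
            Real.Gamma_add_one (by positivity)]
        rw [hrwg, hα', hy]
        have hne : A + A/(m:ℝ) + 1 ≠ 0 := by positivity
        field_simp
        rw [if_pos trivial]; ring
      · have h1mem : (1:ℕ) ∈ Finset.Icc 1 (min m q) := by
          rw [Finset.mem_Icc]; omega
        have hsum1 : ∑ j ∈ Finset.Icc 1 (min m q), l j = l 1 := by
          apply Finset.sum_eq_single_of_mem 1 h1mem
          intro j hj hjne
          rw [Finset.mem_Icc] at hj
          rw [hl']
          simp only
          rw [zero_pow (by omega : j - 1 ≠ 0), mul_zero]
        have hl1 : l 1 = (m:ℝ) * (((q:ℝ) - 1 + A)/((m:ℝ)+A)) * L (q-1) := by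
          rw [hl']
          simp only [Nat.choose_one_right, pow_one, Nat.sub_self, pow_zero, mul_one,
            Nat.cast_one]
        rw [hβ', if_neg (by omega), hsum1, hl1, zero_add]
        have hq1 : (1:ℝ) ≤ (q:ℝ) := by exact_mod_cast hqpos
        have hAm : (0:ℝ) < A/(m:ℝ) := by positivity
        have hcast : ((q-1:ℕ):ℝ) = (q:ℝ) - 1 := by
          rw [Nat.cast_sub hqpos, Nat.cast_one]
        have g1 : Real.Gamma ((q:ℝ) + A) = ((q:ℝ) - 1 + A) * Real.Gamma ((q:ℝ) - 1 + A) := by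
          rw [show (q:ℝ) + A = ((q:ℝ) - 1 + A) + 1 by ring,
            Real.Gamma_add_one (ne_of_gt (by linarith))]
        have g2 : Real.Gamma ((q:ℝ) + A + 2 + A/(m:ℝ)) =
            ((q:ℝ) - 1 + A + 2 + A/(m:ℝ)) * Real.Gamma ((q:ℝ) - 1 + A + 2 + A/(m:ℝ)) := by
          rw [show (q:ℝ)+A+2+A/(m:ℝ) = ((q:ℝ)-1+A+2+A/(m:ℝ))+1 by ring,
            Real.Gamma_add_one (ne_of_gt (by linarith))]
        have hH : Real.Gamma ((q:ℝ) - 1 + A + 2 + A/(m:ℝ)) ≠ 0 :=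
          (Real.Gamma_pos_of_pos (by linarith)).ne'
        have hd2 : (q:ℝ) - 1 + A + 2 + A/(m:ℝ) ≠ 0 := ne_of_gt (by linarith)
        have hLq : L q = (((q:ℝ) - 1 + A) / ((q:ℝ) - 1 + A + 2 + A/(m:ℝ))) * L (q-1) := by
          simp only [hLdef, hcast]
          rw [g1, g2]
          field_simp
        have h1αeq : (1:ℝ) + ((q:ℝ)+A)/((m:ℝ)+A) * m
            = (m:ℝ) * ((q:ℝ) - 1 + A + 2 + A/(m:ℝ)) / ((m:ℝ)+A) := by
          field_simp
          ring
        rw [hLq, hα', hy, h1αeq]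
        rw [show (((q:ℝ) - 1 + A) / ((q:ℝ) - 1 + A + 2 + A/(m:ℝ))) * L (q-1) *
            ((m:ℝ) * ((q:ℝ) - 1 + A + 2 + A/(m:ℝ)) / ((m:ℝ)+A))
            = (m:ℝ) * (((q:ℝ) - 1 + A) / ((m:ℝ)+A)) * L (q-1) *
              (((q:ℝ) - 1 + A + 2 + A/(m:ℝ)) / ((q:ℝ) - 1 + A + 2 + A/(m:ℝ))) from by ring,
          div_self hd2, mul_one]
    rw [hfin] at hode
    exact hode
  intro q
  have hfin := stepB q
  have heq : ∀ᶠ t : ℕ in atTop, Pnet q t = N q t / t := by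
    filter_upwards [eventually_ge_atTop 1] with t ht
    rw [hPnet q t ht, hNdef, one_div, inv_mul_eq_div]
  simp only [hLdef] at hfin
  exact Tendsto.congr' (heq.mono fun t h => h.symm) hfin
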